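/- There is no continuous function v : [0, T] → ℝ with T > 3π satisfying all of the following: |v(0)| = |v(T)| = 1, |v(θ)| < 1 for θ ∈ (0, T), v(θ + π) ≠ −v(θ) for all θ ∈ [0, T − π], and v(θ + 2π) ≠ v(θ) for all θ ∈ [0, T − 2π]. -/

import Mathlib

/-- A continuous function on `[0,b]` that never vanishes and is negative at `0`
is negative everywhere on `[0,b]`. -/
lemma neg_on_Icc {f : ℝ → ℝ} {b : ℝ}
    (hf : ContinuousOn f (Set.Icc 0 b))
    (hne : ∀ x ∈ Set.Icc 0 b, f x ≠ 0) (h0 : f 0 < 0) :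
    ∀ x ∈ Set.Icc 0 b, f x < 0 := by
  intro x hx
  by_contra h
  have hpos : 0 < f x := lt_of_le_of_ne (not_lt.mp h) (Ne.symm (hne x hx))
  have hsub : Set.Icc (0:ℝ) x ⊆ Set.Icc 0 b :=
    Set.Icc_subset_Icc le_rfl hx.2
  have := intermediate_value_Icc hx.1 (hf.mono hsub)
  have h0mem : (0:ℝ) ∈ Set.Icc (f 0) (f x) := ⟨h0.le, hpos.le⟩
  obtain ⟨c, hc, hfc⟩ := this h0mem
  exact hne c (hsub hc) hfc

/-- There is no continuous `v : [0,T] → ℝ` with `T > 3π` satisfying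
`|v 0| = |v T| = 1`, `|v θ| < 1` on `(0,T)`, `v (θ+π) ≠ −v θ` on `[0, T−π]`, and
`v (θ+2π) ≠ v θ` on `[0, T−2π]`. -/
theorem stmt_2 :
    ¬ ∃ (T : ℝ) (v : ℝ → ℝ), 3 * Real.pi < T ∧
      ContinuousOn v (Set.Icc 0 T) ∧
      |v 0| = 1 ∧ |v T| = 1 ∧
      (∀ θ ∈ Set.Ioo 0 T, |v θ| < 1) ∧
      (∀ θ ∈ Set.Icc 0 (T - Real.pi), v (θ + Real.pi) ≠ -v θ) ∧
      (∀ θ ∈ Set.Icc 0 (T - 2 * Real.pi), v (θ + 2 * Real.pi) ≠ v θ) := by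
  rintro ⟨T, v, hT, hv, hv0, hvT, hlt, hpi, h2pi⟩
  have hp : 0 < Real.pi := Real.pi_pos
  set p := Real.pi with hpdef
  -- interior bounds
  have hbp : |v p| < 1 := hlt p ⟨hp, by linarith⟩
  have hb2p : |v (2 * p)| < 1 := hlt (2 * p) ⟨by linarith, by linarith⟩
  have hbTp : |v (T - p)| < 1 := hlt (T - p) ⟨by linarith, by linarith⟩
  have hbT2p : |v (T - 2 * p)| < 1 := hlt (T - 2 * p) ⟨by linarith, by linarith⟩
  rw [abs_lt] at hbp hb2p hbTp hbT2p
  -- continuity of shifted functions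
  have cont_shift : ∀ c : ℝ, 0 ≤ c → c ≤ T →
      ContinuousOn (fun θ => v (θ + c)) (Set.Icc 0 (T - c)) := by
    intro c hc hcT
    apply hv.comp ((continuous_add_right c).continuousOn)
    intro x hx
    simp only [Set.mem_Icc] at hx ⊢
    constructor <;> linarith [hx.1, hx.2]
  have hvsub1 : ContinuousOn v (Set.Icc 0 (T - p)) :=
    hv.mono (Set.Icc_subset_Icc le_rfl (by linarith))
  have hvsub2 : ContinuousOn v (Set.Icc 0 (T - 2 * p)) :=
    hv.mono (Set.Icc_subset_Icc le_rfl (by linarith))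
  have hf_cont : ContinuousOn (fun θ => v (θ + p) + v θ) (Set.Icc 0 (T - p)) :=
    (cont_shift p hp.le (by linarith)).add hvsub1
  have hg_cont : ContinuousOn (fun θ => v (θ + 2 * p) - v θ) (Set.Icc 0 (T - 2 * p)) :=
    (cont_shift (2 * p) (by linarith) (by linarith)).sub hvsub2
  have hf_ne : ∀ x ∈ Set.Icc 0 (T - p), v (x + p) + v x ≠ 0 := by
    intro x hx h
    exact hpi x hx (by linarith)
  have hg_ne : ∀ x ∈ Set.Icc 0 (T - 2 * p), v (x + 2 * p) - v x ≠ 0 := by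
    intro x hx h
    exact h2pi x hx (by linarith)
  have hTp : (T - p) + p = T := by ring
  have hT2p : (T - 2 * p) + 2 * p = T := by ring
  have hmemTp : T - p ∈ Set.Icc 0 (T - p) := ⟨by linarith, le_rfl⟩
  have hmemT2p : T - 2 * p ∈ Set.Icc 0 (T - 2 * p) := ⟨by linarith, le_rfl⟩
  have hv0' : v 0 = 1 ∨ v 0 = -1 := (abs_eq (by norm_num)).mp hv0
  have hvT' : v T = 1 ∨ v T = -1 := (abs_eq (by norm_num)).mp hvT
  rcases hv0' with h0 | h0
  · -- v 0 = 1 : f > 0 and g < 0 everywhere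
    have hf : ∀ x ∈ Set.Icc 0 (T - p), -(v (x + p) + v x) < 0 := by
      apply neg_on_Icc hf_cont.neg
      · intro x hx h; exact hf_ne x hx (by simp only [Pi.neg_apply] at h; linarith)
      · simp only [Pi.neg_apply, zero_add]; linarith [hbp.1]
    have hg : ∀ x ∈ Set.Icc 0 (T - 2 * p), v (x + 2 * p) - v x < 0 := by
      apply neg_on_Icc hg_cont hg_ne
      simp only [zero_add]; linarith [hb2p.2]
    have h1 := hf _ hmemTp
    have h2 := hg _ hmemT2p
    rw [hTp] at h1
    rw [hT2p] at h2
    rcases hvT' with hT1 | hT1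
    · linarith [hbT2p.2]
    · linarith [hbTp.2]
  · -- v 0 = -1 : f < 0 and g > 0 everywhere
    have hf : ∀ x ∈ Set.Icc 0 (T - p), v (x + p) + v x < 0 := by
      apply neg_on_Icc hf_cont hf_ne
      simp only [zero_add]; linarith [hbp.2]
    have hg : ∀ x ∈ Set.Icc 0 (T - 2 * p), -(v (x + 2 * p) - v x) < 0 := by
      apply neg_on_Icc hg_cont.neg
      · intro x hx h; exact hg_ne x hx (by simp only [Pi.neg_apply] at h; linarith)
      · simp only [Pi.neg_apply, zero_add]; linarith [hb2p.1]
    have h1 := hf _ hmemTp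
    have h2 := hg _ hmemT2p
    rw [hTp] at h1
    rw [hT2p] at h2
    rcases hvT' with hT1 | hT1
    · linarith [hbTp.1]
    · linarith [hbT2p.1]
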